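/- arXiv:2205.13395 — 4 statements merged into one kernel-verified Lean document; each statement's English description precedes it below -/
import Mathlib

section
/- Let (Z,r) be a compact metric space and let U_1,…,U_ℓ be a finite open cover of Z with Lebesgue number L > 0 (i.e., for every z ∈ Z there exists k with max over j of dist(z, Z \ U_j) ≥ L, equivalently the ball B(z,L) is contained in some U_k) and multiplicity m (i.e., at most m of the sets U_k contain any given point). Define h_k(x) = dist(x, Z \ U_k) and F_k = h_k / Σ_j h_j. Then each F_k is Lipschitz with Lipschitz constant at most (2m+1)/L. -/
open Metric Finset Classical

/-- Let `U_1, …, U_ℓ` be a finite open cover of a compact metric space `Z`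
with Lebesgue number `L > 0` (for every `z` there is `k` with `dist(z, Z \ U_k) ≥ L`) and
multiplicity `m` (at most `m` of the sets contain any given point).  With
`h_k(x) = dist(x, Z \ U_k)` and `F_k = h_k / Σ_j h_j`, each `F_k` is Lipschitz with
constant at most `(2m+1)/L`. -/
theorem stmt2 (Z : Type*) [MetricSpace Z] [CompactSpace Z]
    (ℓ : ℕ) (U : Fin ℓ → Set Z)
    (hopen : ∀ k, IsOpen (U k)) (hcover : (⋃ k, U k) = Set.univ)
    (L : ℝ) (hL : 0 < L)
    (hLeb : ∀ z : Z, ∃ k, L ≤ Metric.infDist z (U k)ᶜ)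
    (m : ℕ) (hmult : ∀ z : Z, ({k | z ∈ U k} : Finset (Fin ℓ)).card ≤ m) :
    let h : Fin ℓ → Z → ℝ := fun k x => Metric.infDist x (U k)ᶜ
    let F : Fin ℓ → Z → ℝ := fun k x => h k x / ∑ j, h j x
    ∀ k, ∀ x y : Z, |F k x - F k y| ≤ ((2 * m + 1 : ℝ) / L) * dist x y := by
  intro h F k x y
  have hnn : ∀ j (z : Z), 0 ≤ h j z := fun j z => Metric.infDist_nonneg
  have hlip : ∀ j (a b : Z), |h j a - h j b| ≤ dist a b := by
    intro j a b
    rw [abs_sub_le_iff]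
    constructor
    · have := Metric.infDist_le_infDist_add_dist (x := a) (y := b) (s := (U j)ᶜ)
      linarith
    · have := Metric.infDist_le_infDist_add_dist (x := b) (y := a) (s := (U j)ᶜ)
      rw [dist_comm] at this; linarith
  have hzero : ∀ j (z : Z), z ∉ U j → h j z = 0 := fun j z hz =>
    Metric.infDist_zero_of_mem hz
  have hS : ∀ z : Z, L ≤ ∑ j, h j z := by
    intro z
    obtain ⟨j, hj⟩ := hLeb z
    exact hj.trans (Finset.single_le_sum (fun i _ => hnn i z) (Finset.mem_univ j))
  have hsum : ∀ a b : Z, |(∑ j, h j a) - ∑ j, h j b| ≤ 2 * m * dist a b := by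
    intro a b
    set T : Finset (Fin ℓ) := ({k | a ∈ U k} : Finset (Fin ℓ)) ∪ ({k | b ∈ U k} : Finset (Fin ℓ)) with hTdef
    have hT : ∀ j : Fin ℓ, j ∉ T → h j a - h j b = 0 := by
      intro j hj
      simp only [hTdef, Finset.mem_union, Finset.mem_filter, Finset.mem_univ, true_and,
        Set.mem_setOf_eq, not_or] at hj
      rw [hzero j a hj.1, hzero j b hj.2, sub_zero]
    have hcard : (T.card : ℝ) ≤ 2 * m := by
      have h0 : T.card ≤ m + m :=
        (Finset.card_union_le _ _).trans (add_le_add (hmult a) (hmult b))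
      calc (T.card : ℝ) ≤ ((m + m : ℕ) : ℝ) := by exact_mod_cast h0
        _ = 2 * m := by push_cast; ring
    calc |(∑ j, h j a) - ∑ j, h j b| = |∑ j, (h j a - h j b)| := by rw [Finset.sum_sub_distrib]
      _ = |∑ j ∈ T, (h j a - h j b)| := by
          rw [Finset.sum_subset (Finset.subset_univ T) (fun j _ hj => hT j hj)]
      _ ≤ ∑ j ∈ T, |h j a - h j b| := Finset.abs_sum_le_sum_abs _ _
      _ ≤ ∑ _j ∈ T, dist a b := Finset.sum_le_sum (fun j _ => hlip j a b)
      _ = T.card * dist a b := by rw [Finset.sum_const, nsmul_eq_mul]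
      _ ≤ 2 * m * dist a b := mul_le_mul_of_nonneg_right hcard dist_nonneg
  set Sx := ∑ j, h j x with hSx
  set Sy := ∑ j, h j y with hSy
  have hLx : L ≤ Sx := hS x
  have hLy : L ≤ Sy := hS y
  have hSxp : 0 < Sx := lt_of_lt_of_le hL hLx
  have hSyp : 0 < Sy := lt_of_lt_of_le hL hLy
  have hky : h k y ≤ Sy := Finset.single_le_sum (fun i _ => hnn i y) (Finset.mem_univ k)
  have e1 : F k x - F k y = (h k x - h k y) / Sx + h k y * (Sy - Sx) / (Sx * Sy) := by
    simp only [F, ← hSx, ← hSy]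
    field_simp
    ring
  have habs : |Sy - Sx| ≤ 2 * m * dist x y := by
    have := hsum y x
    rw [dist_comm] at this
    exact this
  have t1 : |h k x - h k y| / Sx ≤ dist x y / L :=
    div_le_div₀ dist_nonneg (hlip k x y) hL hLx
  have t2 : h k y * |Sy - Sx| / (Sx * Sy) ≤ 2 * m * dist x y / L := by
    have h1 : h k y * |Sy - Sx| ≤ Sy * (2 * m * dist x y) :=
      mul_le_mul hky habs (abs_nonneg _) hSyp.le
    calc h k y * |Sy - Sx| / (Sx * Sy) ≤ Sy * (2 * m * dist x y) / (Sx * Sy) :=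
          (div_le_div_iff_of_pos_right (mul_pos hSxp hSyp)).mpr h1
      _ = 2 * m * dist x y / Sx := by
          rw [mul_comm Sx Sy]; exact mul_div_mul_left _ _ (ne_of_gt hSyp)
      _ ≤ 2 * m * dist x y / L := div_le_div₀ (by positivity) le_rfl hL hLx
  calc |F k x - F k y| ≤ |(h k x - h k y) / Sx| + |h k y * (Sy - Sx) / (Sx * Sy)| := by
        rw [e1]; exact abs_add_le _ _
    _ = |h k x - h k y| / Sx + h k y * |Sy - Sx| / (Sx * Sy) := by
        rw [abs_div, abs_div, abs_of_pos hSxp, abs_of_pos (mul_pos hSxp hSyp), abs_mul,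
          abs_of_nonneg (hnn k y)]
    _ ≤ dist x y / L + 2 * m * dist x y / L := add_le_add t1 t2
    _ = ((2 * m + 1 : ℝ) / L) * dist x y := by field_simp; ring
end

section
/- Let H be a Hilbert space with orthonormal basis (δ_y)_{y ∈ Y} indexed by a set Y. Suppose given finitely many functions f_1,…,f_ℓ : Y → [0,1] with Σ_k f_k(y)² = 1 for all y, and injective maps σ_k, τ_k defined on {y : f_k(y) > 0} into Y such that the assignment y ↦ (σ_k(y), τ_k(y)) for different k with f_k(y) > 0 gives pairwise distinct pairs, and such that the pair (σ_k(y), τ_k(y)) determines y and k uniquely (i.e., if f_k(y) > 0, f_{k'}(y') > 0 and (σ_k(y), τ_k(y)) = (σ_{k'}(y'), τ_{k'}(y'))) then k = k' and y = y'). Then the linear operator ι : H → H ⊗ H defined on basis vectors by ι(δ_y) = Σ_k f_k(y) δ_{σ_k(y)} ⊗ δ_{τ_k(y)} is an isometry. -/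
open Finset

/-- Let `H = ℓ²(Y)` with orthonormal basis `(δ_y)`.  Given functions
`f_1, …, f_ℓ : Y → [0,1]` with `Σ_k f_k(y)² = 1`, and maps `σ_k, τ_k` (relevant only where
`f_k > 0`) such that the pair `(σ_k(y), τ_k(y))` determines `y` and `k` uniquely among
points where the corresponding coefficient is positive, the linear operator
`ι(δ_y) = Σ_k f_k(y) δ_{σ_k(y)} ⊗ δ_{τ_k(y)}` from `ℓ²(Y)` to `ℓ²(Y) ⊗ ℓ²(Y) ≅ ℓ²(Y × Y)`
is an isometry. -/
theorem stmt7 (Y : Type*) [DecidableEq Y] (ℓ : ℕ)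
    (f : Fin ℓ → Y → ℝ) (hf01 : ∀ k y, f k y ∈ Set.Icc (0 : ℝ) 1)
    (hsum : ∀ y, ∑ k, (f k y) ^ 2 = 1)
    (σ τ : Fin ℓ → Y → Y)
    (hinj : ∀ k k' y y', 0 < f k y → 0 < f k' y' →
      (σ k y, τ k y) = (σ k' y', τ k' y') → k = k' ∧ y = y') :
    ∃ ι : lp (fun _ : Y => ℂ) 2 →ₗᵢ[ℂ] lp (fun _ : Y × Y => ℂ) 2,
      ∀ y : Y, ι (lp.single 2 y 1) =
        ∑ k : Fin ℓ, (f k y : ℂ) • lp.single 2 (σ k y, τ k y) 1 := by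
  classical
  set v : Y → lp (fun _ : Y × Y => ℂ) 2 :=
    fun y => ∑ k : Fin ℓ, (f k y : ℂ) • lp.single 2 (σ k y, τ k y) 1 with hv
  have hsingle : ∀ a b : Y × Y,
      (inner ℂ (lp.single 2 a (1:ℂ) : lp (fun _ : Y × Y => ℂ) 2) (lp.single 2 b 1) : ℂ)
        = if a = b then 1 else 0 := by
    intro a b
    rw [lp.inner_single_left, lp.single_apply]
    by_cases h : a = b <;> simp [h]
  have hterm : ∀ (k k' : Fin ℓ) (y y' : Y), (k, y) ≠ (k', y') →
      (f k' y' : ℂ) * ((f k y : ℂ) *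
        (if (σ k y, τ k y) = (σ k' y', τ k' y') then (1:ℂ) else 0)) = 0 := by
    intro k k' y y' hne
    rcases eq_or_lt_of_le (hf01 k y).1 with h0 | h0
    · simp [← h0]
    rcases eq_or_lt_of_le (hf01 k' y').1 with h0' | h0'
    · simp [← h0']
    rw [if_neg, mul_zero, mul_zero]
    intro hpq
    obtain ⟨rfl, rfl⟩ := hinj k k' y y' h0 h0' hpq
    exact hne rfl
  have hinner : ∀ y y', (inner ℂ (v y) (v y') : ℂ) = if y = y' then 1 else 0 := by
    intro y y'
    rw [hv]
    simp only [sum_inner, inner_sum, inner_smul_left, inner_smul_right, Complex.conj_ofReal,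
      hsingle, Finset.mul_sum]
    by_cases hyy : y = y'
    · subst hyy
      rw [if_pos rfl]
      have key : ∀ k : Fin ℓ, ∑ k' : Fin ℓ, (f k y : ℂ) * ((f k' y : ℂ) *
          (if (σ k' y, τ k' y) = (σ k y, τ k y) then (1:ℂ) else 0)) = (f k y : ℂ) ^ 2 := by
        intro k
        rw [Finset.sum_eq_single_of_mem k (mem_univ k)]
        · simp [sq]
        · intro k' _ hk'
          exact hterm k' k y y (by simp [hk'])
      rw [Finset.sum_congr rfl fun k _ => key k]
      exact_mod_cast congrArg (Complex.ofReal ·) (hsum y)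
    · rw [if_neg hyy]
      refine Finset.sum_eq_zero fun k _ => Finset.sum_eq_zero fun k' _ => ?_
      exact hterm k' k y y' (by simp [fun h : y = y' => hyy h])
  have hon : Orthonormal ℂ v := orthonormal_iff_ite.mpr hinner
  refine ⟨hon.orthogonalFamily.linearIsometry, fun y => ?_⟩
  have h := hon.orthogonalFamily.linearIsometry_apply_single (i := y) (1 : ℂ)
  rw [h, LinearIsometry.toSpanSingleton_apply, one_smul, hv]
end

section
/- Let H, H' be Hilbert spaces and for each n ∈ ℕ let W_n = c_n^{-1} Σ_{m=n}^{2n} θ_m where the θ_m : H → H' are bounded operators satisfying θ_m*θ_m = (2m+1)·1 and θ_m*θ_{m'} = 0 for m ≠ m', and c_n = ((n+1)(3n+1))^{1/2}. Then each W_n is an isometry, and for every fixed j ≥ 0, W_{n+j}* W_n = a_{n,j}·1 where a_{n,j} = (n+1−j)(3n+1+j) / ((n+1+j)(3n+1+3j)(n+1)(3n+1))^{1/2} for n ≥ j; consequently ‖W_{n+j} − W_n‖ = (2 − 2a_{n,j})^{1/2}, and lim_{n→∞} ‖W_{n+j} − W_n‖ = 0. -/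
open Finset Filter Topology

/-- Let `θ_m : H → H'` satisfy `θ_m*θ_m = (2m+1)·1` and `θ_m*θ_{m'} = 0`
for `m ≠ m'`, and set `W_n = c_n^{-1} Σ_{m=n}^{2n} θ_m` with `c_n = ((n+1)(3n+1))^{1/2}`.
Then each `W_n` is an isometry; for `j ≥ 0` and `n ≥ j`, `W_{n+j}* W_n = a_{n,j}·1` with
`a_{n,j} = (n+1−j)(3n+1+j)/((n+1+j)(3n+1+3j)(n+1)(3n+1))^{1/2}`; consequently
`‖W_{n+j} − W_n‖ = (2 − 2a_{n,j})^{1/2}` and `‖W_{n+j} − W_n‖ → 0` as `n → ∞`. -/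
theorem stmt9 (H H' : Type*)
    [NormedAddCommGroup H] [InnerProductSpace ℂ H] [CompleteSpace H]
    [NormedAddCommGroup H'] [InnerProductSpace ℂ H'] [CompleteSpace H']
    [Nontrivial H]
    (θ : ℕ → (H →L[ℂ] H'))
    (hscaled : ∀ m, ∀ x y : H,
      (inner ℂ (θ m x) (θ m y) : ℂ) = ((2 * m + 1 : ℝ) : ℂ) * inner ℂ x y)
    (horth : ∀ m m', m ≠ m' → ∀ x y : H, inner ℂ (θ m x) (θ m' y) = (0 : ℂ)) :
    let c : ℕ → ℝ := fun n => Real.sqrt (((n : ℝ) + 1) * (3 * n + 1))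
    let W : ℕ → (H →L[ℂ] H') := fun n => (((c n)⁻¹ : ℝ) : ℂ) • ∑ m ∈ Finset.Icc n (2 * n), θ m
    let a : ℕ → ℕ → ℝ := fun n j =>
      (((n : ℝ) + 1 - j) * (3 * n + 1 + j)) /
        Real.sqrt (((n : ℝ) + 1 + j) * (3 * n + 1 + 3 * j) * (n + 1) * (3 * n + 1))
    (∀ n, ∀ x : H, ‖W n x‖ = ‖x‖) ∧
      (∀ j n, j ≤ n → ∀ x y : H,
        (inner ℂ (W (n + j) x) (W n y) : ℂ) = ((a n j : ℝ) : ℂ) * inner ℂ x y) ∧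
      (∀ j n, j ≤ n → ‖W (n + j) - W n‖ = Real.sqrt (2 - 2 * a n j)) ∧
      (∀ j : ℕ, Tendsto (fun n => ‖W (n + j) - W n‖) atTop (𝓝 0)) := by
  intro c W a
  -- positivity facts about c
  have hcprodpos : ∀ n : ℕ, (0:ℝ) < ((n : ℝ) + 1) * (3 * n + 1) := by
    intro n; positivity
  have hcpos : ∀ n : ℕ, 0 < c n := fun n => Real.sqrt_pos.mpr (hcprodpos n)
  have hc2 : ∀ n : ℕ, (c n) ^ 2 = ((n : ℝ) + 1) * (3 * n + 1) :=
    fun n => Real.sq_sqrt (hcprodpos n).le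
  -- sums of odd numbers
  have hrange : ∀ k : ℕ, ∑ m ∈ Finset.range k, (2 * (m:ℝ) + 1) = (k:ℝ)^2 := by
    intro k
    induction k with
    | zero => simp
    | succ k ih => rw [Finset.sum_range_succ, ih]; push_cast; ring
  have hicc : ∀ p q : ℕ, p ≤ q + 1 →
      ∑ m ∈ Finset.Icc p q, (2 * (m:ℝ) + 1) = ((q:ℝ)+1)^2 - (p:ℝ)^2 := by
    intro p q h
    rw [← Finset.Ico_add_one_right_eq_Icc, Finset.sum_Ico_eq_sub _ h, hrange, hrange]
    push_cast; ring
  -- the key inner product formula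
  have key : ∀ p q : ℕ, ∀ x y : H, (inner ℂ (W p x) (W q y) : ℂ) =
      ((((c p)⁻¹ * (c q)⁻¹ *
        ∑ m ∈ Finset.Icc p (2*p) ∩ Finset.Icc q (2*q), (2 * (m:ℝ) + 1)) : ℝ) : ℂ) *
        inner ℂ x y := by
    intro p q x y
    have hW : ∀ n : ℕ, ∀ z : H, W n z = (((c n)⁻¹ : ℝ) : ℂ) • ∑ m ∈ Finset.Icc n (2*n), θ m z := by
      intro n z
      simp [W, ContinuousLinearMap.sum_apply]
    rw [hW, hW, inner_smul_left, inner_smul_right, inner_sum]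
    have hin : ∀ m' ∈ Finset.Icc q (2*q),
        (inner ℂ ((∑ m ∈ Finset.Icc p (2*p), θ m x)) (θ m' y) : ℂ) =
        (if m' ∈ Finset.Icc p (2*p) then ((2 * (m':ℝ) + 1 : ℝ) : ℂ) * inner ℂ x y else 0) := by
      intro m' _
      rw [sum_inner]
      by_cases hm : m' ∈ Finset.Icc p (2*p)
      · rw [if_pos hm, Finset.sum_eq_single m']
        · exact hscaled m' x y
        · intro b _ hb; exact horth b m' hb x y
        · intro h; exact absurd hm h
      · rw [if_neg hm, Finset.sum_eq_zero]
        intro b hb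
        exact horth b m' (fun h => hm (h ▸ hb)) x y
    rw [Finset.sum_congr rfl hin, Finset.sum_ite_mem, Finset.inter_comm,
      ← Finset.sum_mul, Complex.conj_ofReal]
    push_cast
    ring
  -- values of the scalar in the two relevant cases
  have hsame : ∀ n : ℕ, ((c n)⁻¹ * (c n)⁻¹ *
      ∑ m ∈ Finset.Icc n (2*n) ∩ Finset.Icc n (2*n), (2 * (m:ℝ) + 1)) = 1 := by
    intro n
    rw [Finset.inter_self, hicc n (2*n) (by omega)]
    have hS : (((2*n : ℕ):ℝ)+1)^2 - (n:ℝ)^2 = (c n)^2 := by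
      rw [hc2]; push_cast; ring
    rw [hS]
    field_simp [(hcpos n).ne']
  have hsqrtD : ∀ j n : ℕ,
      Real.sqrt (((n : ℝ) + 1 + j) * (3 * n + 1 + 3 * j) * (n + 1) * (3 * n + 1)) =
        c (n + j) * c n := by
    intro j n
    have h1 : ((n : ℝ) + 1 + j) * (3 * n + 1 + 3 * j) * (n + 1) * (3 * n + 1) =
        ((((n+j:ℕ):ℝ) + 1) * (3 * ((n+j:ℕ):ℝ) + 1)) * (((n:ℝ) + 1) * (3 * n + 1)) := by
      push_cast; ring
    rw [h1, Real.sqrt_mul (hcprodpos (n+j)).le]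
  have hmix : ∀ j n : ℕ, j ≤ n → ((c (n+j))⁻¹ * (c n)⁻¹ *
      ∑ m ∈ Finset.Icc (n+j) (2*(n+j)) ∩ Finset.Icc n (2*n), (2 * (m:ℝ) + 1)) = a n j := by
    intro j n hj
    have hint : Finset.Icc (n+j) (2*(n+j)) ∩ Finset.Icc n (2*n) = Finset.Icc (n+j) (2*n) := by
      ext m; simp only [Finset.mem_inter, Finset.mem_Icc]; omega
    rw [hint, hicc (n+j) (2*n) (by omega)]
    show _ = _ / _
    rw [hsqrtD j n]
    have hN : (((2*n : ℕ):ℝ)+1)^2 - ((n+j:ℕ):ℝ)^2 = ((n:ℝ) + 1 - j) * (3 * n + 1 + j) := by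
      push_cast; ring
    rw [hN]
    field_simp [(hcpos n).ne', (hcpos (n+j)).ne']
  -- Part 1
  have part1 : ∀ n, ∀ x : H, ‖W n x‖ = ‖x‖ := by
    intro n x
    have h1 := key n n x x
    rw [hsame n] at h1
    have h2 : ‖W n x‖^2 = ‖x‖^2 := by
      rw [← @inner_self_eq_norm_sq ℂ, ← @inner_self_eq_norm_sq ℂ H, h1]
      simp
    have := congrArg Real.sqrt h2
    rwa [Real.sqrt_sq (norm_nonneg _), Real.sqrt_sq (norm_nonneg _)] at this
  -- Part 2
  have part2 : ∀ j n, j ≤ n → ∀ x y : H,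
      (inner ℂ (W (n + j) x) (W n y) : ℂ) = ((a n j : ℝ) : ℂ) * inner ℂ x y := by
    intro j n hj x y
    rw [key (n+j) n x y, hmix j n hj]
  -- 2 - 2 * a n j is nonnegative (via an auxiliary nonzero vector)
  obtain ⟨x₀, hx₀⟩ := exists_ne (0 : H)
  have hnormsq : ∀ j n, j ≤ n → ∀ x : H,
      ‖(W (n+j) - W n) x‖^2 = (2 - 2 * a n j) * ‖x‖^2 := by
    intro j n hj x
    have h1 : (W (n+j) - W n) x = W (n+j) x - W n x := rfl
    rw [h1, @norm_sub_sq ℂ, part1, part1, part2 j n hj x x]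
    have : RCLike.re (((a n j : ℝ) : ℂ) * (inner ℂ x x : ℂ)) = a n j * ‖x‖^2 := by
      rw [← @inner_self_eq_norm_sq ℂ]
      simp [RCLike.mul_re]
    rw [this]; ring
  have hanle : ∀ j n, j ≤ n → 2 - 2 * a n j ≥ 0 := by
    intro j n hj
    have h := hnormsq j n hj x₀
    have hx2 : (0:ℝ) < ‖x₀‖^2 := pow_pos (norm_pos_iff.mpr hx₀) 2
    nlinarith [sq_nonneg ‖(W (n+j) - W n) x₀‖]
  -- Part 3
  have part3 : ∀ j n, j ≤ n → ‖W (n + j) - W n‖ = Real.sqrt (2 - 2 * a n j) := by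
    intro j n hj
    apply ContinuousLinearMap.opNorm_eq_of_bounds (Real.sqrt_nonneg _)
    · intro x
      have h := hnormsq j n hj x
      have : ‖(W (n+j) - W n) x‖ = Real.sqrt (2 - 2 * a n j) * ‖x‖ := by
        have := congrArg Real.sqrt h
        rwa [Real.sqrt_sq (norm_nonneg _),
          Real.sqrt_mul (hanle j n hj), Real.sqrt_sq (norm_nonneg _)] at this
      rw [this]
    · intro N hN hb
      have h := hb x₀
      have hx : (0:ℝ) < ‖x₀‖ := norm_pos_iff.mpr hx₀
      have heq : ‖(W (n+j) - W n) x₀‖ = Real.sqrt (2 - 2 * a n j) * ‖x₀‖ := by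
        have := congrArg Real.sqrt (hnormsq j n hj x₀)
        rwa [Real.sqrt_sq (norm_nonneg _),
          Real.sqrt_mul (hanle j n hj), Real.sqrt_sq (norm_nonneg _)] at this
      rw [heq] at h
      exact le_of_mul_le_mul_right h hx
  -- Part 4 : the limit
  have part4 : ∀ j : ℕ, Tendsto (fun n => ‖W (n + j) - W n‖) atTop (𝓝 0) := by
    intro j
    -- a n j → 1
    have haupper : ∀ n, j ≤ n → a n j ≤ 1 := by
      intro n hj
      have h := hanle j n hj
      linarith
    have halower : ∀ n, j ≤ n →
        (((n:ℝ) + 1 - j) * (3 * n + 1 + j)) / (((n:ℝ) + 1 + j) * (3 * n + 1 + 3 * j)) ≤ a n j := by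
      intro n hj
      have hjn : (j:ℝ) ≤ (n:ℝ) := by exact_mod_cast hj
      have hNnn : (0:ℝ) ≤ ((n:ℝ) + 1 - j) * (3 * n + 1 + j) := by
        have h1 : (0:ℝ) ≤ (n:ℝ) + 1 - j := by linarith
        have h2 : (0:ℝ) ≤ 3 * (n:ℝ) + 1 + j := by positivity
        exact mul_nonneg h1 h2
      have hPpos : (0:ℝ) < ((n:ℝ) + 1 + j) * (3 * n + 1 + 3 * j) := by positivity
      have hsle : Real.sqrt (((n : ℝ) + 1 + j) * (3 * n + 1 + 3 * j) * (n + 1) * (3 * n + 1)) ≤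
          ((n:ℝ) + 1 + j) * (3 * n + 1 + 3 * j) := by
        rw [show ((n : ℝ) + 1 + j) * (3 * n + 1 + 3 * j) * (n + 1) * (3 * n + 1) =
          (((n:ℝ) + 1 + j) * (3 * n + 1 + 3 * j)) * (((n:ℝ) + 1) * (3 * n + 1)) by ring]
        have hjnn : (0:ℝ) ≤ (j:ℝ) := Nat.cast_nonneg j
        calc Real.sqrt ((((n:ℝ) + 1 + j) * (3 * n + 1 + 3 * j)) * (((n:ℝ) + 1) * (3 * n + 1)))
            ≤ Real.sqrt ((((n:ℝ) + 1 + j) * (3 * n + 1 + 3 * j)) *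
              (((n:ℝ) + 1 + j) * (3 * n + 1 + 3 * j))) := by
              apply Real.sqrt_le_sqrt
              have hQleP : ((n:ℝ)+1)*(3*(n:ℝ)+1) ≤ ((n:ℝ)+1+j)*(3*(n:ℝ)+1+3*j) := by
                nlinarith
              exact mul_le_mul_of_nonneg_left hQleP hPpos.le
          _ = ((n:ℝ) + 1 + j) * (3 * n + 1 + 3 * j) := Real.sqrt_mul_self hPpos.le
      have hsqrtpos : (0:ℝ) <
          Real.sqrt (((n : ℝ) + 1 + j) * (3 * n + 1 + 3 * j) * (n + 1) * (3 * n + 1)) := by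
        apply Real.sqrt_pos.mpr; positivity
      exact div_le_div_of_nonneg_left hNnn hsqrtpos hsle
    -- the lower bound tends to 1
    have hf1 : Tendsto (fun n : ℕ => ((n:ℝ) + 1 - j) / ((n:ℝ) + 1 + j)) atTop (𝓝 1) := by
      have hden : Tendsto (fun n : ℕ => (n:ℝ) + 1 + j) atTop atTop := by
        have := tendsto_atTop_add_const_right atTop ((1:ℝ) + j) tendsto_natCast_atTop_atTop
        convert this using 2 with n
        ring
      have hz : Tendsto (fun n : ℕ => (2*(j:ℝ)) / ((n:ℝ) + 1 + j)) atTop (𝓝 0) :=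
        Tendsto.div_atTop tendsto_const_nhds hden
      have : Tendsto (fun n : ℕ => 1 - (2*(j:ℝ)) / ((n:ℝ) + 1 + j)) atTop (𝓝 (1 - 0)) :=
        tendsto_const_nhds.sub hz
      rw [sub_zero] at this
      apply this.congr
      intro n
      have hdnz : ((n:ℝ) + 1 + j) ≠ 0 := by positivity
      field_simp
      ring
    have hf2 : Tendsto (fun n : ℕ => (3*(n:ℝ) + 1 + j) / (3*(n:ℝ) + 1 + 3*j)) atTop (𝓝 1) := by
      have hden : Tendsto (fun n : ℕ => 3*(n:ℝ) + 1 + 3*j) atTop atTop := by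
        have h3 : Tendsto (fun n : ℕ => 3*(n:ℝ)) atTop atTop :=
          (tendsto_natCast_atTop_atTop (R := ℝ)).const_mul_atTop (by norm_num)
        have := tendsto_atTop_add_const_right atTop ((1:ℝ) + 3*j) h3
        convert this using 2 with n
        ring
      have hz : Tendsto (fun n : ℕ => (2*(j:ℝ)) / (3*(n:ℝ) + 1 + 3*j)) atTop (𝓝 0) :=
        Tendsto.div_atTop tendsto_const_nhds hden
      have : Tendsto (fun n : ℕ => 1 - (2*(j:ℝ)) / (3*(n:ℝ) + 1 + 3*j)) atTop (𝓝 (1 - 0)) :=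
        tendsto_const_nhds.sub hz
      rw [sub_zero] at this
      apply this.congr
      intro n
      have hdnz : (3*(n:ℝ) + 1 + 3*j) ≠ 0 := by positivity
      field_simp
      ring
    have hL : Tendsto (fun n : ℕ =>
        (((n:ℝ) + 1 - j) * (3 * n + 1 + j)) / (((n:ℝ) + 1 + j) * (3 * n + 1 + 3 * j)))
        atTop (𝓝 1) := by
      have := hf1.mul hf2
      rw [mul_one] at this
      apply this.congr
      intro n
      rw [div_mul_div_comm]
    have ha1 : Tendsto (fun n : ℕ => a n j) atTop (𝓝 1) := by
      apply tendsto_of_tendsto_of_tendsto_of_le_of_le' hL tendsto_const_nhds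
      · filter_upwards [eventually_ge_atTop j] with n hn using halower n hn
      · filter_upwards [eventually_ge_atTop j] with n hn using haupper n hn
    have h2a : Tendsto (fun n : ℕ => 2 - 2 * a n j) atTop (𝓝 0) := by
      have h : Tendsto (fun n : ℕ => 2 - 2 * a n j) atTop (𝓝 (2 - 2 * 1)) :=
        Tendsto.sub tendsto_const_nhds (ha1.const_mul 2)
      simpa using h
    have hsqrt0 : Tendsto (fun n : ℕ => Real.sqrt (2 - 2 * a n j)) atTop (𝓝 0) := by
      have := (Real.continuous_sqrt.tendsto 0).comp h2a
      rw [Real.sqrt_zero] at this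
      exact this
    apply hsqrt0.congr'
    filter_upwards [eventually_ge_atTop j] with n hn
    exact (part3 j n hn).symm
  exact ⟨part1, part2, part3, part4⟩
end

section
/- Let H, H' be Hilbert spaces, u a unitary on H, and v a unitary on H'. For n ∈ ℕ and r ∈ ℤ let ι_{n,r} = v^r ι_{n,0} u^{−r} where ι_{n,0} : H → H' are isometries such that the family {ι_{2m,r} : m ∈ ℕ, |r| ≤ 2m−1} has mutually orthogonal ranges. Define θ_m = Σ_{r=−m}^{m} ι_{2m,r} and W_n = c_n^{-1} Σ_{m=n}^{2n} θ_m with c_n = ((n+1)(3n+1))^{1/2}. Then for every fixed j ≥ 0 and n ≥ j, W_n* v^j W_n = ((3n+1−j)/(3n+1)) u^j, and consequently ‖v^j W_n − W_n u^j‖ = O(n^{−1/2}) as n → ∞. -/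
open Finset Filter Topology

/-- With unitaries `u` of `H` and `v` of `H'`, isometries
`ι_{n,r} = v^r ι_{n,0} u^{−r} : H → H'` such that the family `{ι_{2m,r}}` has mutually
orthogonal ranges, `θ_m = Σ_{r=−m}^m ι_{2m,r}` and `W_n = c_n^{-1} Σ_{m=n}^{2n} θ_m`
(`c_n = ((n+1)(3n+1))^{1/2}`), one has, for fixed `j ≥ 0` and `n ≥ j`,
`W_n* v^j W_n = ((3n+1−j)/(3n+1)) u^j`, and consequently
`‖v^j W_n − W_n u^j‖ = O(n^{−1/2})`. -/
theorem stmt10 (H H' : Type*)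
    [NormedAddCommGroup H] [InnerProductSpace ℂ H] [CompleteSpace H]
    [NormedAddCommGroup H'] [InnerProductSpace ℂ H'] [CompleteSpace H']
    (u : H ≃ₗᵢ[ℂ] H) (v : H' ≃ₗᵢ[ℂ] H')
    (ι : ℕ → ℤ → (H →L[ℂ] H'))
    (hiso : ∀ n, ∀ x : H, ‖ι n 0 x‖ = ‖x‖)
    (hrel : ∀ n, ∀ r : ℤ, ∀ x : H, ι n r x = (v ^ r) (ι n 0 ((u ^ (-r)) x)))
    (horth : ∀ (m m' : ℕ) (r r' : ℤ), (m, r) ≠ (m', r') →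
      ∀ x y : H, inner ℂ (ι (2 * m) r x) (ι (2 * m') r' y) = (0 : ℂ)) :
    let c : ℕ → ℝ := fun n => Real.sqrt (((n : ℝ) + 1) * (3 * n + 1))
    let θ : ℕ → (H →L[ℂ] H') := fun m => ∑ r ∈ Finset.Icc (-(m : ℤ)) (m : ℤ), ι (2 * m) r
    let W : ℕ → (H →L[ℂ] H') := fun n => (((c n)⁻¹ : ℝ) : ℂ) • ∑ m ∈ Finset.Icc n (2 * n), θ m
    ∀ j : ℕ,
      (∀ n, j ≤ n → ∀ x y : H,
        (inner ℂ (W n x) ((v ^ (j : ℤ)) (W n y)) : ℂ) =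
          (((3 * (n : ℝ) + 1 - j) / (3 * (n : ℝ) + 1) : ℝ) : ℂ) *
            inner ℂ x ((u ^ (j : ℤ)) y)) ∧
      ∃ C : ℝ, ∀ n : ℕ, j ≤ n →
        ‖((v ^ (j : ℤ)).toLinearIsometry.toContinuousLinearMap).comp (W n) -
            (W n).comp ((u ^ (j : ℤ)).toLinearIsometry.toContinuousLinearMap)‖ ≤
          C / Real.sqrt n := by
  intro c θ W
  have hselfH : ∀ z : H, (inner ℂ z z : ℂ) = ((‖z‖^2 : ℝ) : ℂ) := fun z => by
    exact_mod_cast inner_self_eq_norm_sq_to_K (𝕜 := ℂ) z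
  have hselfH' : ∀ z : H', (inner ℂ z z : ℂ) = ((‖z‖^2 : ℝ) : ℂ) := fun z => by
    exact_mod_cast inner_self_eq_norm_sq_to_K (𝕜 := ℂ) z
  -- every ι n r preserves inner ℂ products
  have hiso' : ∀ n (r : ℤ) (x y : H), (inner ℂ (ι n r x) (ι n r y) : ℂ) = inner ℂ x y := by
    intro n r x y
    have hn : ∀ z : H, ‖ι n r z‖ = ‖z‖ := by
      intro z
      rw [hrel, LinearIsometryEquiv.norm_map, hiso, LinearIsometryEquiv.norm_map]
    exact LinearIsometry.inner_map_map ⟨(ι n r).toLinearMap, hn⟩ x y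
  -- intertwining relation
  have hshift : ∀ n (r jz : ℤ) (x : H), (v ^ jz) (ι n r x) = ι n (r + jz) ((u ^ jz) x) := by
    intro n r jz x
    rw [hrel n r, hrel n (r + jz)]
    have hu : (u ^ (-(r + jz))) ((u ^ jz) x) = (u ^ (-r)) x := by
      rw [show (u ^ (-r)) x = (u ^ (-(r+jz) + jz)) x by ring_nf, zpow_add]; rfl
    rw [hu, show (r + jz) = jz + r from add_comm _ _, zpow_add]; rfl
  -- the main inner-product computation, for arbitrary jz
  have hmain : ∀ (jz n : ℕ), jz ≤ n → ∀ x y : H,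
      (inner ℂ (W n x) ((v ^ (jz : ℤ)) (W n y)) : ℂ) =
        (((3 * (n : ℝ) + 1 - jz) / (3 * (n : ℝ) + 1) : ℝ) : ℂ) *
          inner ℂ x ((u ^ (jz : ℤ)) y) := by
    intro jz n hjn x y
    set Y := (u ^ (jz : ℤ)) y with hY
    set c0 : ℂ := inner ℂ x Y with hc0
    have hWx : ∀ z : H, W n z = (((c n)⁻¹ : ℝ) : ℂ) •
        ∑ m ∈ Icc n (2*n), ∑ r ∈ Icc (-(m:ℤ)) (m:ℤ), ι (2*m) r z := by
      intro z
      simp only [W, θ, ContinuousLinearMap.smul_apply, ContinuousLinearMap.sum_apply]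
    have hvW : (v ^ (jz:ℤ)) (W n y) = (((c n)⁻¹ : ℝ) : ℂ) •
        ∑ m' ∈ Icc n (2*n), ∑ r' ∈ Icc (-(m':ℤ)) (m':ℤ), ι (2*m') (r' + (jz:ℤ)) Y := by
      rw [hWx y, map_smul, map_sum]
      congr 1
      refine Finset.sum_congr rfl fun m' _ => ?_
      rw [map_sum]
      exact Finset.sum_congr rfl fun r' _ => hshift _ _ _ _
    have hbig : (inner ℂ (∑ m ∈ Icc n (2*n), ∑ r ∈ Icc (-(m:ℤ)) (m:ℤ), ι (2*m) r x)
        (∑ m' ∈ Icc n (2*n), ∑ r' ∈ Icc (-(m':ℤ)) (m':ℤ), ι (2*m') (r' + (jz:ℤ)) Y) : ℂ)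
        = ∑ m ∈ Icc n (2*n), ∑ r ∈ Icc (-(m:ℤ)) (m:ℤ), ∑ m' ∈ Icc n (2*n),
            ∑ r' ∈ Icc (-(m':ℤ)) (m':ℤ),
              (inner ℂ (ι (2*m) r x) (ι (2*m') (r' + (jz:ℤ)) Y) : ℂ) := by
      rw [sum_inner]
      refine Finset.sum_congr rfl fun m _ => ?_
      rw [sum_inner]
      refine Finset.sum_congr rfl fun r _ => ?_
      rw [inner_sum]
      refine Finset.sum_congr rfl fun m' _ => ?_
      rw [inner_sum]
    have expand : (inner ℂ (W n x) ((v ^ (jz : ℤ)) (W n y)) : ℂ)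
        = (((c n)⁻¹ : ℝ) : ℂ) * ((((c n)⁻¹ : ℝ) : ℂ) *
          ∑ m ∈ Icc n (2*n), ∑ r ∈ Icc (-(m:ℤ)) (m:ℤ), ∑ m' ∈ Icc n (2*n),
            ∑ r' ∈ Icc (-(m':ℤ)) (m':ℤ),
              (inner ℂ (ι (2*m) r x) (ι (2*m') (r' + (jz:ℤ)) Y) : ℂ)) := by
      rw [hWx x, hvW, inner_smul_left, inner_smul_right, hbig, Complex.conj_ofReal]
    rw [expand, ← mul_assoc]
    have step1 : ∀ m ∈ Icc n (2*n), ∀ r : ℤ,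
        (∑ m' ∈ Icc n (2*n), ∑ r' ∈ Icc (-(m':ℤ)) (m':ℤ),
          (inner ℂ (ι (2*m) r x) (ι (2*m') (r' + (jz:ℤ)) Y) : ℂ))
        = if r - (jz:ℤ) ∈ Icc (-(m:ℤ)) (m:ℤ) then c0 else 0 := by
      intro m hm r
      rw [Finset.sum_eq_single_of_mem m hm]
      · have h1 : ∀ r' ∈ Icc (-(m:ℤ)) (m:ℤ),
            (inner ℂ (ι (2*m) r x) (ι (2*m) (r' + (jz:ℤ)) Y) : ℂ)
              = if r' = r - (jz:ℤ) then c0 else 0 := by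
          intro r' _
          by_cases h : r' = r - (jz:ℤ)
          · rw [if_pos h, h, show r - (jz:ℤ) + jz = r by ring, hiso']
          · rw [if_neg h]
            exact horth m m r (r' + jz) (by simp only [ne_eq, Prod.mk.injEq]; omega) x Y
        rw [Finset.sum_congr rfl h1, Finset.sum_ite_eq' _ (r - (jz:ℤ)) (fun _ => c0)]
      · intro m' hm' hne
        apply Finset.sum_eq_zero
        intro r' _
        exact horth m m' r (r' + jz)
          (by simp only [ne_eq, Prod.mk.injEq]; intro ⟨h1, _⟩; exact hne h1.symm) x Y
    rw [Finset.sum_congr rfl (fun m hm => Finset.sum_congr rfl (fun r _ => step1 m hm r))]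
    have step2 : ∀ m ∈ Icc n (2*n),
        (∑ r ∈ Icc (-(m:ℤ)) (m:ℤ), if r - (jz:ℤ) ∈ Icc (-(m:ℤ)) (m:ℤ) then c0 else 0)
          = (2*(m:ℂ)+1-jz) * c0 := by
      intro m hm
      rw [mem_Icc] at hm
      have hjm : (jz:ℤ) ≤ m := by exact_mod_cast le_trans hjn hm.1
      rw [← Finset.sum_filter]
      have hfil : (Finset.Icc (-(m:ℤ)) (m:ℤ)).filter
          (fun r => r - (jz:ℤ) ∈ Finset.Icc (-(m:ℤ)) (m:ℤ)) = Finset.Icc ((jz:ℤ) - m) m := by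
        ext r; simp [Finset.mem_filter, Finset.mem_Icc]; omega
      rw [hfil, Finset.sum_const, Int.card_Icc, nsmul_eq_mul]
      congr 1
      have h : ((m:ℤ) + 1 - ((jz:ℤ) - m)) = 2*m+1-jz := by ring
      have h2 : (0:ℤ) ≤ 2*(m:ℤ)+1-jz := by omega
      rw [h]
      calc (((2*(m:ℤ)+1-jz).toNat : ℕ) : ℂ)
          = (((((2*(m:ℤ)+1-jz).toNat : ℕ) : ℤ)) : ℂ) := by norm_cast
        _ = ((2*(m:ℤ)+1-jz : ℤ) : ℂ) := by rw [Int.toNat_of_nonneg h2]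
        _ = 2*(m:ℂ)+1-jz := by push_cast; ring
    rw [Finset.sum_congr rfl step2, ← Finset.sum_mul]
    -- evaluate the arithmetic sum
    have gauss : ∀ k : ℕ, ∑ i ∈ range k, (i : ℂ) = k * (k - 1) / 2 := by
      intro k
      induction k with
      | zero => simp
      | succ k ih => rw [sum_range_succ, ih]; push_cast; ring
    have hsum : (∑ m ∈ Icc n (2*n), (2*(m:ℂ)+1-jz)) = ((n:ℂ)+1) * (3*(n:ℂ)+1-jz) := by
      rw [← Finset.Ico_add_one_right_eq_Icc, Finset.sum_Ico_eq_sum_range,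
        show 2*n+1-n = n+1 by omega]
      calc ∑ i ∈ range (n+1), (2*(((n+i:ℕ)):ℂ)+1-jz)
          = ∑ i ∈ range (n+1), ((2*(n:ℂ)+1-(jz:ℂ)) + 2*(i:ℂ)) := by
            apply Finset.sum_congr rfl; intro i _; push_cast; ring
        _ = (n+1) * (2*(n:ℂ)+1-(jz:ℂ)) + 2 * ∑ i ∈ range (n+1), (i:ℂ) := by
            rw [Finset.sum_add_distrib, Finset.sum_const, card_range, ← Finset.mul_sum,
              nsmul_eq_mul]; push_cast; ring
        _ = ((n:ℂ)+1) * (3*(n:ℂ)+1-jz) := by rw [gauss]; push_cast; ring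
    rw [hsum]
    -- final coefficient arithmetic
    have hA : (0:ℝ) ≤ ((n:ℝ)+1) * (3*n+1) := by positivity
    have hz : (((c n)⁻¹ : ℝ) : ℂ) * (((c n)⁻¹ : ℝ) : ℂ)
        = (((((n:ℝ)+1) * (3*n+1))⁻¹ : ℝ) : ℂ) := by
      rw [← Complex.ofReal_mul]
      congr 1
      rw [← mul_inv]
      simp only [c]
      rw [Real.mul_self_sqrt hA]
    rw [hz]
    have h1 : ((n:ℂ)+1) ≠ 0 := by
      have : (((n+1 : ℕ)):ℂ) ≠ 0 := Nat.cast_ne_zero.mpr (Nat.succ_ne_zero n)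
      push_cast at this; exact this
    have h2 : (3*(n:ℂ)+1) ≠ 0 := by
      have : (((3*n+1 : ℕ)):ℂ) ≠ 0 := Nat.cast_ne_zero.mpr (Nat.succ_ne_zero _)
      push_cast at this; exact this
    push_cast
    rw [← mul_assoc]
    congr 1
    field_simp
  intro j
  refine ⟨hmain j, ?_⟩
  -- part 2
  refine ⟨Real.sqrt (2*j), ?_⟩
  intro n hjn
  set D := ((v ^ (j : ℤ)).toLinearIsometry.toContinuousLinearMap).comp (W n) -
      (W n).comp ((u ^ (j : ℤ)).toLinearIsometry.toContinuousLinearMap) with hD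
  have h3n : (0:ℝ) < 3*n+1 := by positivity
  set K : ℝ := 2*j/(3*(n:ℝ)+1) with hK
  have hK0 : 0 ≤ K := by positivity
  -- W n is an isometry
  have hWiso : ∀ x : H, ‖W n x‖ = ‖x‖ := by
    intro x
    have := hmain 0 n (Nat.zero_le n) x x
    simp only [Nat.cast_zero, zpow_zero, sub_zero, div_self (ne_of_gt h3n),
      Complex.ofReal_one, one_mul, LinearIsometryEquiv.coe_one, id_eq] at this
    rw [hselfH' (W n x), hselfH x] at this
    have h2 : ‖W n x‖^2 = ‖x‖^2 := by exact_mod_cast this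
    calc ‖W n x‖ = Real.sqrt (‖W n x‖^2) := (Real.sqrt_sq (norm_nonneg _)).symm
      _ = Real.sqrt (‖x‖^2) := by rw [h2]
      _ = ‖x‖ := Real.sqrt_sq (norm_nonneg _)
  have hre : ∀ x : H, Complex.re (inner ℂ ((v ^ (j:ℤ)) (W n x)) (W n ((u ^ (j:ℤ)) x)))
      = (3*(n:ℝ)+1-j)/(3*(n:ℝ)+1) * ‖x‖^2 := by
    intro x
    have h := hmain j n hjn ((u ^ (j:ℤ)) x) x
    have h2 : (inner ℂ ((v ^ (j:ℤ)) (W n x)) (W n ((u ^ (j:ℤ)) x)) : ℂ)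
        = (starRingEnd ℂ) (inner ℂ (W n ((u ^ (j:ℤ)) x)) ((v ^ (j:ℤ)) (W n x))) := by
      rw [inner_conj_symm]
    rw [h2, h, map_mul, Complex.conj_ofReal, inner_conj_symm, hselfH]
    rw [LinearIsometryEquiv.norm_map, ← Complex.ofReal_mul, Complex.ofReal_re]
  have hDnorm : ∀ x : H, ‖D x‖ = Real.sqrt K * ‖x‖ := by
    intro x
    have hDx : D x = (v ^ (j:ℤ)) (W n x) - W n ((u ^ (j:ℤ)) x) := by
      simp [hD, ContinuousLinearMap.sub_apply, ContinuousLinearMap.comp_apply,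
        LinearIsometry.coe_toContinuousLinearMap, LinearIsometryEquiv.coe_toLinearIsometry]
    have hsq : ‖D x‖^2 = K * ‖x‖^2 := by
      rw [hDx, norm_sub_sq (𝕜 := ℂ)]
      rw [LinearIsometryEquiv.norm_map, hWiso, hWiso, LinearIsometryEquiv.norm_map]
      rw [RCLike.re_to_complex, hre x, hK]
      field_simp
      ring
    have := congrArg Real.sqrt hsq
    rwa [Real.sqrt_sq (norm_nonneg _), Real.sqrt_mul hK0, Real.sqrt_sq (norm_nonneg _)] at this
  have hDle : ‖D‖ ≤ Real.sqrt K :=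
    ContinuousLinearMap.opNorm_le_bound _ (Real.sqrt_nonneg _) (fun x => le_of_eq (hDnorm x))
  refine le_trans hDle ?_
  rcases Nat.eq_zero_or_pos n with hn0 | hn0
  · subst hn0
    have hj0 : j = 0 := Nat.le_zero.mp hjn
    subst hj0
    simp [hK]
  · have hn' : (0:ℝ) < n := by exact_mod_cast hn0
    have h1 : K ≤ 2*j/(n:ℝ) := by
      rw [hK]
      gcongr
      linarith
    calc Real.sqrt K ≤ Real.sqrt (2*j/(n:ℝ)) := Real.sqrt_le_sqrt h1
      _ = Real.sqrt (2*j) / Real.sqrt n := Real.sqrt_div (by positivity) _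
end
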